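/- Let Q be a finite quiver with vertex set I, k a field, Θ ∈ ℤ^I, and V a nonzero finite-dimensional representation of Q over k. Then there exists a unique filtration by subrepresentations 0 = V_0 ⊊ V_1 ⊊ ⋯ ⊊ V_n = V such that: (i) each subquotient V_j/V_{j−1} is semistable, i.e. for every subrepresentation U of V with V_{j−1} ⊆ U ⊆ V_j and U ≠ V_{j−1} one has s(dim U − dim V_{j−1}) ≤ s(dim V_j − dim V_{j−1}); and (ii) the slopes s(dim V_j − dim V_{j−1}) are strictly decreasing in j. (Harder–Narasimhan filtration.) -/

import Mathlib

open Matrix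

/-- The slopeVec of a dimension vector `β` with respect to weights `Θ`:
`s(β) = (∑ Θ_i β_i) / (∑ β_i)`. -/
noncomputable def slopeVec {I : Type*} [Fintype I] (Θ : I → ℤ) (β : I → ℕ) : ℚ :=
  (∑ i, (Θ i : ℚ) * (β i : ℚ)) / (∑ i, (β i : ℚ))

/-- A family of subspaces `W i ⊆ k^{α i}` is a subrepresentation of the quiver
representation `x` if it is stable under all the maps `x_a`. -/
def IsSubrep {I A : Type*} (t h : A → I) {k : Type*} [Field k] {α : I → ℕ}
    (x : ∀ a : A, Matrix (Fin (α (h a))) (Fin (α (t a))) k)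
    (W : ∀ i : I, Submodule k (Fin (α i) → k)) : Prop :=
  ∀ a : A, ∀ v ∈ W (t a), (x a).mulVec v ∈ W (h a)

/-- The dimension vector of a family of subspaces. -/
noncomputable def subrepDim {I : Type*} (k : Type*) [Field k] {α : I → ℕ}
    (W : ∀ i : I, Submodule k (Fin (α i) → k)) : I → ℕ :=
  fun i => Module.finrank k (W i)

/-- A representation of dimension vector `α` is `Θ`-slopeVec semistable if `s(dim W) ≤ s(α)`
for every subrepresentation `W` with `W ≠ 0` and `W ≠ V`. -/
noncomputable def SlopeSemistable {I A : Type*} [Fintype I] (t h : A → I) (Θ : I → ℤ)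
    {k : Type*} [Field k] {α : I → ℕ}
    (x : ∀ a : A, Matrix (Fin (α (h a))) (Fin (α (t a))) k) : Prop :=
  ∀ W : ∀ i : I, Submodule k (Fin (α i) → k), IsSubrep t h x W →
    W ≠ (fun _ => ⊥) → W ≠ (fun _ => ⊤) →
    slopeVec Θ (subrepDim k W) ≤ slopeVec Θ α

/-- A representation of dimension vector `α` is `Θ`-slopeVec stable if `s(dim W) < s(α)`
for every subrepresentation `W` with `W ≠ 0` and `W ≠ V`. -/
noncomputable def SlopeStable {I A : Type*} [Fintype I] (t h : A → I) (Θ : I → ℤ)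
    {k : Type*} [Field k] {α : I → ℕ}
    (x : ∀ a : A, Matrix (Fin (α (h a))) (Fin (α (t a))) k) : Prop :=
  ∀ W : ∀ i : I, Submodule k (Fin (α i) → k), IsSubrep t h x W →
    W ≠ (fun _ => ⊥) → W ≠ (fun _ => ⊤) →
    slopeVec Θ (subrepDim k W) < slopeVec Θ α

/-- `F = (n, (V_0, …, V_n))` is a Harder–Narasimhan filtration of the representation `x`:
`0 = V_0 ⊊ V_1 ⊊ ⋯ ⊊ V_n = V`, a chain of subrepresentations such that (i) every subquotient
`V_j/V_{j-1}` is semistable (expressed via subrepresentations `U` with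
`V_{j-1} ⊆ U ⊆ V_j`), and (ii) the slopes of the subquotients are strictly decreasing. -/
noncomputable def IsHNFiltration {I A : Type*} [Fintype I] (t h : A → I) (Θ : I → ℤ)
    {k : Type*} [Field k] {α : I → ℕ}
    (x : ∀ a : A, Matrix (Fin (α (h a))) (Fin (α (t a))) k)
    (F : Σ n : ℕ, Fin (n + 1) → ∀ i : I, Submodule k (Fin (α i) → k)) : Prop :=
  (∀ i, F.2 0 i = ⊥) ∧ (∀ i, F.2 (Fin.last F.1) i = ⊤) ∧
  (∀ j : Fin (F.1 + 1), IsSubrep t h x (F.2 j)) ∧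
  (∀ j : Fin F.1, (∀ i, F.2 j.castSucc i ≤ F.2 j.succ i) ∧ F.2 j.castSucc ≠ F.2 j.succ) ∧
  (∀ j : Fin F.1, ∀ U : ∀ i : I, Submodule k (Fin (α i) → k),
    IsSubrep t h x U →
    (∀ i, F.2 j.castSucc i ≤ U i) → (∀ i, U i ≤ F.2 j.succ i) → U ≠ F.2 j.castSucc →
    slopeVec Θ (fun i => subrepDim k U i - subrepDim k (F.2 j.castSucc) i)
      ≤ slopeVec Θ (fun i => subrepDim k (F.2 j.succ) i - subrepDim k (F.2 j.castSucc) i)) ∧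
  (∀ j j' : Fin F.1, j < j' →
    slopeVec Θ (fun i => subrepDim k (F.2 j'.succ) i - subrepDim k (F.2 j'.castSucc) i)
      < slopeVec Θ (fun i => subrepDim k (F.2 j.succ) i - subrepDim k (F.2 j.castSucc) i))


namespace HNaux

abbrev Sub (I : Type) (k : Type) [Field k] (α : I → ℕ) : Type :=
  ∀ i : I, Submodule k (Fin (α i) → k)

section main

variable {I A : Type} [Fintype I] {k : Type} [Field k] {α : I → ℕ}

lemma d_le_alpha (U : Sub I k α) (i : I) : subrepDim k U i ≤ α i := by
  have h1 := Submodule.finrank_le (U i)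
  simpa [subrepDim, Module.finrank_fin_fun] using h1

lemma d_mono {B U : Sub I k α} (hBU : ∀ i, B i ≤ U i) (i : I) :
    subrepDim k B i ≤ subrepDim k U i :=
  Submodule.finrank_mono (hBU i)

lemma eq_of_d_le {B U : Sub I k α} (hBU : ∀ i, B i ≤ U i)
    (hd : ∀ i, subrepDim k U i ≤ subrepDim k B i) : B = U :=
  funext fun i => Submodule.eq_of_le_of_finrank_eq (hBU i)
    (le_antisymm (d_mono hBU i) (hd i))

/-- relative weight -/
noncomputable def wt (Θ : I → ℤ) (B U : Sub I k α) : ℚ :=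
  ∑ i, (Θ i : ℚ) * ((subrepDim k U i : ℚ) - (subrepDim k B i : ℚ))

/-- relative size -/
noncomputable def sz (B U : Sub I k α) : ℚ :=
  ∑ i, ((subrepDim k U i : ℚ) - (subrepDim k B i : ℚ))

/-- relative slope -/
noncomputable def relSl (Θ : I → ℤ) (B U : Sub I k α) : ℚ :=
  slopeVec Θ fun i => subrepDim k U i - subrepDim k B i

lemma relSl_eq (Θ : I → ℤ) {B U : Sub I k α} (hBU : ∀ i, B i ≤ U i) :
    relSl Θ B U = wt Θ B U / sz B U := by
  unfold relSl slopeVec wt sz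
  congr 1
  · exact Finset.sum_congr rfl fun i _ => by rw [Nat.cast_sub (d_mono hBU i)]
  · exact Finset.sum_congr rfl fun i _ => Nat.cast_sub (d_mono hBU i)

lemma sz_nonneg {B U : Sub I k α} (hBU : ∀ i, B i ≤ U i) : 0 ≤ sz B U :=
  Finset.sum_nonneg fun i _ => sub_nonneg.2 (by exact_mod_cast d_mono hBU i)

lemma sz_pos {B U : Sub I k α} (hBU : ∀ i, B i ≤ U i) (hne : B ≠ U) :
    0 < sz B U := by
  have hex : ∃ i, subrepDim k B i < subrepDim k U i := by
    by_contra hc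
    push_neg at hc
    exact hne (eq_of_d_le hBU hc)
  obtain ⟨i0, hi0⟩ := hex
  refine Finset.sum_pos' (fun i _ => sub_nonneg.2 (by exact_mod_cast d_mono hBU i))
    ⟨i0, Finset.mem_univ _, by rw [sub_pos]; exact_mod_cast hi0⟩

lemma wt_cocycle (Θ : I → ℤ) (B M U : Sub I k α) :
    wt Θ B U = wt Θ B M + wt Θ M U := by
  unfold wt
  rw [← Finset.sum_add_distrib]
  exact Finset.sum_congr rfl fun i _ => by ring

lemma sz_cocycle (B M U : Sub I k α) :
    sz B U = sz B M + sz M U := by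
  unfold sz
  rw [← Finset.sum_add_distrib]
  exact Finset.sum_congr rfl fun i _ => by ring

lemma wt_self (Θ : I → ℤ) (B : Sub I k α) : wt Θ B B = 0 := by simp [wt]

lemma sz_self (B : Sub I k α) : sz B B = 0 := by simp [sz]

lemma wt_sup_inf (Θ : I → ℤ) (B U D : Sub I k α) :
    wt Θ B (fun i => U i ⊔ D i) + wt Θ B (fun i => U i ⊓ D i)
      = wt Θ B U + wt Θ B D := by
  unfold wt
  rw [← Finset.sum_add_distrib, ← Finset.sum_add_distrib]
  refine Finset.sum_congr rfl fun i _ => ?_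
  have key : (subrepDim k (fun j => U j ⊔ D j) i : ℚ)
      + (subrepDim k (fun j => U j ⊓ D j) i : ℚ)
      = (subrepDim k U i : ℚ) + subrepDim k D i := by
    exact_mod_cast Submodule.finrank_sup_add_finrank_inf_eq (U i) (D i)
  linear_combination (Θ i : ℚ) * key

lemma sz_sup_inf (B U D : Sub I k α) :
    sz B (fun i => U i ⊔ D i) + sz B (fun i => U i ⊓ D i) = sz B U + sz B D := by
  unfold sz
  rw [← Finset.sum_add_distrib, ← Finset.sum_add_distrib]
  refine Finset.sum_congr rfl fun i _ => ?_
  have key : (subrepDim k (fun j => U j ⊔ D j) i : ℚ)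
      + (subrepDim k (fun j => U j ⊓ D j) i : ℚ)
      = (subrepDim k U i : ℚ) + subrepDim k D i := by
    exact_mod_cast Submodule.finrank_sup_add_finrank_inf_eq (U i) (D i)
  linear_combination key

lemma relSl_le_iff (Θ : I → ℤ) {B U : Sub I k α} (hBU : ∀ i, B i ≤ U i)
    (hne : B ≠ U) {μ : ℚ} : relSl Θ B U ≤ μ ↔ wt Θ B U ≤ μ * sz B U := by
  rw [relSl_eq Θ hBU, div_le_iff₀ (sz_pos hBU hne)]

lemma le_relSl_iff (Θ : I → ℤ) {B U : Sub I k α} (hBU : ∀ i, B i ≤ U i)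
    (hne : B ≠ U) {μ : ℚ} : μ ≤ relSl Θ B U ↔ μ * sz B U ≤ wt Θ B U := by
  rw [relSl_eq Θ hBU, le_div_iff₀ (sz_pos hBU hne)]

lemma relSl_lt_iff (Θ : I → ℤ) {B U : Sub I k α} (hBU : ∀ i, B i ≤ U i)
    (hne : B ≠ U) {μ : ℚ} : relSl Θ B U < μ ↔ wt Θ B U < μ * sz B U := by
  rw [relSl_eq Θ hBU, div_lt_iff₀ (sz_pos hBU hne)]

lemma wt_eq_of_relSl_eq (Θ : I → ℤ) {B U : Sub I k α} (hBU : ∀ i, B i ≤ U i)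
    (hne : B ≠ U) {μ : ℚ} (hsl : relSl Θ B U = μ) : wt Θ B U = μ * sz B U := by
  rw [relSl_eq Θ hBU] at hsl
  field_simp [(sz_pos hBU hne).ne'] at hsl
  linarith [hsl]

/-- total size -/
noncomputable def tsz (U : Sub I k α) : ℕ := ∑ i, subrepDim k U i

lemma tsz_le (U : Sub I k α) : tsz U ≤ ∑ i, α i :=
  Finset.sum_le_sum fun i _ => d_le_alpha U i

lemma tsz_lt {B U : Sub I k α} (hBU : ∀ i, B i ≤ U i) (hne : B ≠ U) :
    tsz B < tsz U := by
  have hex : ∃ i, subrepDim k B i < subrepDim k U i := by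
    by_contra hc
    push_neg at hc
    exact hne (eq_of_d_le hBU hc)
  obtain ⟨i0, hi0⟩ := hex
  exact Finset.sum_lt_sum (fun i _ => d_mono hBU i) ⟨i0, Finset.mem_univ _, hi0⟩

lemma eq_of_tsz_le {B U : Sub I k α} (hBU : ∀ i, B i ≤ U i)
    (ht : tsz U ≤ tsz B) : B = U := by
  by_contra hne
  exact absurd ht (not_le.2 (tsz_lt hBU hne))


section rep

set_option linter.unusedSectionVars false

variable (t h : A → I) (Θ : I → ℤ)
variable (x : ∀ a : A, Matrix (Fin (α (h a))) (Fin (α (t a))) k)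

lemma isSubrep_bot : IsSubrep t h x (fun i => (⊥ : Submodule k (Fin (α i) → k))) := by
  intro a v hv
  have hv0 : v = 0 := by simpa using hv
  simp [hv0, Matrix.mulVec_zero]

lemma isSubrep_top : IsSubrep t h x (fun i => (⊤ : Submodule k (Fin (α i) → k))) := by
  intro a v _
  trivial

lemma isSubrep_inf {U D : Sub I k α} (hU : IsSubrep t h x U) (hD : IsSubrep t h x D) :
    IsSubrep t h x (fun i => U i ⊓ D i) := by
  intro a v hv
  rw [Submodule.mem_inf] at hv ⊢
  exact ⟨hU a v hv.1, hD a v hv.2⟩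

lemma isSubrep_sup {U D : Sub I k α} (hU : IsSubrep t h x U) (hD : IsSubrep t h x D) :
    IsSubrep t h x (fun i => U i ⊔ D i) := by
  intro a v hv
  obtain ⟨y, hy, z, hz, rfl⟩ := Submodule.mem_sup.1 hv
  rw [Matrix.mulVec_add]
  exact Submodule.add_mem_sup (hU a y hy) (hD a z hz)

/-- `D` is the maximal destabilizing subrepresentation relative to the base `B`. -/
def MaxDest (B D : Sub I k α) : Prop :=
  IsSubrep t h x D ∧ (∀ i, B i ≤ D i) ∧ B ≠ D ∧
  ∀ U : Sub I k α, IsSubrep t h x U → (∀ i, B i ≤ U i) → B ≠ U →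
    relSl Θ B U ≤ relSl Θ B D ∧
    (relSl Θ B D ≤ relSl Θ B U → ∀ i, U i ≤ D i)

lemma maxDest_unique {B D D' : Sub I k α}
    (h1 : MaxDest t h Θ x B D) (h2 : MaxDest t h Θ x B D') : D = D' := by
  have a1 := h1.2.2.2 D' h2.1 h2.2.1 h2.2.2.1
  have a2 := h2.2.2.2 D h1.1 h1.2.1 h1.2.2.1
  have e1 : ∀ i, D' i ≤ D i := a1.2 a2.1
  have e2 : ∀ i, D i ≤ D' i := a2.2 a1.1
  exact funext fun i => le_antisymm (e2 i) (e1 i)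

lemma maxDest_exists {B : Sub I k α} (hB : IsSubrep t h x B)
    (hBtop : B ≠ fun i => (⊤ : Submodule k (Fin (α i) → k))) :
    ∃ D, MaxDest t h Θ x B D := by
  classical
  set S : Set (Sub I k α) :=
    {U | IsSubrep t h x U ∧ (∀ i, B i ≤ U i) ∧ B ≠ U} with hS
  have hTopS : (fun i => (⊤ : Submodule k (Fin (α i) → k))) ∈ S :=
    ⟨isSubrep_top t h x, fun i => le_top, hBtop⟩
  have hbig : {β : I → ℕ | ∀ i, β i ≤ α i}.Finite := by
    have hset : {β : I → ℕ | ∀ i, β i ≤ α i} = Set.pi Set.univ fun i => Set.Iic (α i) := by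
      ext β
      simp [Set.mem_pi, Set.mem_Iic, Pi.le_def]
    rw [hset]
    exact Set.Finite.pi fun i => Set.finite_Iic _
  -- the set of slopes of proper oversubreps of B is finite and nonempty
  have hfin : ((fun U => relSl Θ B U) '' S).Finite := by
    refine Set.Finite.subset (Set.Finite.image
      (fun β : I → ℕ => slopeVec Θ fun i => β i - subrepDim k B i) hbig) ?_
    rintro q ⟨U, hU, rfl⟩
    exact ⟨subrepDim k U, fun i => d_le_alpha U i, rfl⟩
  have hne : ((fun U => relSl Θ B U) '' S).Nonempty := ⟨_, Set.mem_image_of_mem _ hTopS⟩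
  obtain ⟨μ, hμS, hμmax'⟩ := Set.Finite.exists_maximalFor id _ hfin hne
  have hmax : ∀ U ∈ S, relSl Θ B U ≤ μ := by
    intro U hU
    rcases le_total (relSl Θ B U) μ with h' | h'
    · exact h'
    · exact (hμmax' (Set.mem_image_of_mem _ hU) h').ge
  -- among those of maximal slope, one of maximal total dimension
  set S2 : Set (Sub I k α) := {U | U ∈ S ∧ relSl Θ B U = μ} with hS2
  obtain ⟨U0, hU0S, hU0μ⟩ := hμS
  have hS2ne : S2.Nonempty := ⟨U0, hU0S, hU0μ⟩
  have hfin2 : (tsz '' S2).Finite :=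
    Set.Finite.subset (Set.finite_Iic (∑ i, α i)) (by rintro m ⟨U, _, rfl⟩; exact tsz_le U)
  obtain ⟨m, hmS, hmmax'⟩ := Set.Finite.exists_maximalFor id _ hfin2 (hS2ne.image _)
  obtain ⟨D, hDS2, hDm⟩ := hmS
  have hszmax : ∀ U ∈ S2, tsz U ≤ tsz D := by
    intro U hU
    rcases le_total (tsz U) (tsz D) with h' | h'
    · exact h'
    · rw [hDm]
      exact (hmmax' (Set.mem_image_of_mem _ hU) (hDm ▸ h')).ge
  obtain ⟨hDsub, hBD, hBneD⟩ := hDS2.1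
  have hDμ : relSl Θ B D = μ := hDS2.2
  refine ⟨D, hDsub, hBD, hBneD, ?_⟩
  intro U hU hBU hBneU
  have hUS : U ∈ S := ⟨hU, hBU, hBneU⟩
  have hUle : relSl Θ B U ≤ μ := hmax U hUS
  refine ⟨hUle.trans_eq hDμ.symm, ?_⟩
  intro hge
  have hUμ : relSl Θ B U = μ := le_antisymm hUle (hDμ ▸ hge)
  -- consider the sup E and inf C of U and D
  set C : Sub I k α := fun i => U i ⊓ D i with hC
  set E : Sub I k α := fun i => U i ⊔ D i with hE
  have hBC : ∀ i, B i ≤ C i := fun i => le_inf (hBU i) (hBD i)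
  have hBE : ∀ i, B i ≤ E i := fun i => (hBU i).trans le_sup_left
  have hBneE : B ≠ E := by
    intro heq
    apply hBneD
    refine funext fun i => le_antisymm (hBD i) ?_
    calc D i ≤ E i := le_sup_right
    _ = B i := (congrFun heq i).symm
  have hwtC : wt Θ B C ≤ μ * sz B C := by
    rcases eq_or_ne B C with heq | hne'
    · rw [← heq, wt_self, sz_self, mul_zero]
    · have hCS : C ∈ S := ⟨isSubrep_inf t h x hU hDsub, hBC, hne'⟩
      exact (relSl_le_iff Θ hBC hne').1 (hmax C hCS)
  have hwtU : wt Θ B U = μ * sz B U := wt_eq_of_relSl_eq Θ hBU hBneU hUμ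
  have hwtD : wt Θ B D = μ * sz B D := wt_eq_of_relSl_eq Θ hBD hBneD hDμ
  have hwtE : μ * sz B E ≤ wt Θ B E := by
    have h1 := wt_sup_inf Θ B U D
    have h2 := sz_sup_inf B U D
    rw [← hC, ← hE] at h1 h2
    have h2' : μ * sz B E + μ * sz B C = μ * sz B U + μ * sz B D := by
      rw [← mul_add, h2, mul_add]
    linarith [h1, h2', hwtC, hwtU, hwtD]
  have hEμ : relSl Θ B E = μ := by
    have hES : E ∈ S := ⟨isSubrep_sup t h x hU hDsub, hBE, hBneE⟩
    exact le_antisymm (hmax E hES) ((le_relSl_iff Θ hBE hBneE).2 hwtE)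
  have hES2 : E ∈ S2 := ⟨⟨isSubrep_sup t h x hU hDsub, hBE, hBneE⟩, hEμ⟩
  have htszE : tsz E ≤ tsz D := hszmax E hES2
  have htadd : tsz E + tsz C = tsz U + tsz D := by
    unfold tsz
    rw [← Finset.sum_add_distrib, ← Finset.sum_add_distrib]
    exact Finset.sum_congr rfl fun i _ =>
      Submodule.finrank_sup_add_finrank_inf_eq (U i) (D i)
  have htUC : tsz U ≤ tsz C := by omega
  have hCU : ∀ i, C i ≤ U i := fun i => inf_le_left
  have hCeqU : C = U := eq_of_tsz_le hCU htUC
  intro i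
  calc U i = C i := (congrFun hCeqU i).symm
  _ ≤ D i := inf_le_right

end rep

section chain

set_option linter.unusedSectionVars false

variable (t h : A → I) (Θ : I → ℤ)
variable (x : ∀ a : A, Matrix (Fin (α (h a))) (Fin (α (t a))) k)

open Classical in
/-- one step of the HN chain -/
noncomputable def nextSub (B : Sub I k α) : Sub I k α :=
  if hc : IsSubrep t h x B ∧ B ≠ fun i => (⊤ : Submodule k (Fin (α i) → k)) then
    (maxDest_exists t h Θ x hc.1 hc.2).choose
  else fun i => (⊤ : Submodule k (Fin (α i) → k))

/-- the HN chain -/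
noncomputable def chain : ℕ → Sub I k α
  | 0 => fun i => (⊥ : Submodule k (Fin (α i) → k))
  | m + 1 => nextSub t h Θ x (chain m)

lemma chain_subrep : ∀ m, IsSubrep t h x (chain t h Θ x m) := by
  intro m
  induction m with
  | zero => exact isSubrep_bot t h x
  | succ m ih =>
    show IsSubrep t h x (nextSub t h Θ x (chain t h Θ x m))
    unfold nextSub
    split
    · next hc => exact (maxDest_exists t h Θ x hc.1 hc.2).choose_spec.1
    · exact isSubrep_top t h x

lemma chain_maxDest {m : ℕ}
    (hm : chain t h Θ x m ≠ fun i => (⊤ : Submodule k (Fin (α i) → k))) :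
    MaxDest t h Θ x (chain t h Θ x m) (chain t h Θ x (m + 1)) := by
  show MaxDest t h Θ x _ (nextSub t h Θ x (chain t h Θ x m))
  unfold nextSub
  rw [dif_pos ⟨chain_subrep t h Θ x m, hm⟩]
  exact (maxDest_exists t h Θ x (chain_subrep t h Θ x m) hm).choose_spec

lemma chain_stabilizes {m : ℕ}
    (hm : chain t h Θ x m = fun i => (⊤ : Submodule k (Fin (α i) → k))) :
    chain t h Θ x (m + 1) = fun i => (⊤ : Submodule k (Fin (α i) → k)) := by
  show nextSub t h Θ x (chain t h Θ x m) = _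
  unfold nextSub
  rw [dif_neg]
  rintro ⟨-, hne⟩
  exact hne hm

lemma chain_exists_top :
    ∃ m, chain t h Θ x m = fun i => (⊤ : Submodule k (Fin (α i) → k)) := by
  have key : ∀ m : ℕ,
      chain t h Θ x m = (fun i => (⊤ : Submodule k (Fin (α i) → k)))
        ∨ m ≤ tsz (chain t h Θ x m) := by
    intro m
    induction m with
    | zero => exact Or.inr (Nat.zero_le _)
    | succ m ih =>
      rcases eq_or_ne (chain t h Θ x m)
          (fun i => (⊤ : Submodule k (Fin (α i) → k))) with htop | hne
      · exact Or.inl (chain_stabilizes t h Θ x htop)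
      · rcases ih with htop | hle
        · exact absurd htop hne
        · have hMD := chain_maxDest t h Θ x hne
          have hlt : tsz (chain t h Θ x m) < tsz (chain t h Θ x (m + 1)) :=
            tsz_lt hMD.2.1 hMD.2.2.1
          exact Or.inr (by omega)
  refine ⟨(∑ i, α i) + 1, ?_⟩
  rcases key ((∑ i, α i) + 1) with htop | hle
  · exact htop
  · have := tsz_le (chain t h Θ x ((∑ i, α i) + 1))
    omega

/-- adjacent slopes strictly decrease along the chain -/
lemma chain_slope_adj {m : ℕ}
    (hm1 : chain t h Θ x (m + 1) ≠ fun i => (⊤ : Submodule k (Fin (α i) → k))) :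
    relSl Θ (chain t h Θ x (m + 1)) (chain t h Θ x (m + 2))
      < relSl Θ (chain t h Θ x m) (chain t h Θ x (m + 1)) := by
  have hm : chain t h Θ x m ≠ fun i => (⊤ : Submodule k (Fin (α i) → k)) := by
    intro htop
    exact hm1 (chain_stabilizes t h Θ x htop)
  set B := chain t h Θ x m
  set D := chain t h Θ x (m + 1)
  set E := chain t h Θ x (m + 2)
  have hBD := chain_maxDest t h Θ x hm
  have hDE : MaxDest t h Θ x D E := chain_maxDest t h Θ x hm1
  by_contra hcon
  push_neg at hcon
  -- hcon : relSl Θ B D ≤ relSl Θ D E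
  set μ : ℚ := relSl Θ B D with hμ
  have hBDle : ∀ i, B i ≤ D i := hBD.2.1
  have hBDne : B ≠ D := hBD.2.2.1
  have hDEle : ∀ i, D i ≤ E i := hDE.2.1
  have hDEne : D ≠ E := hDE.2.2.1
  have hBE : ∀ i, B i ≤ E i := fun i => (hBDle i).trans (hDEle i)
  have hBneE : B ≠ E := by
    intro heq
    apply hDEne
    refine funext fun i => le_antisymm (hDEle i) ?_
    calc E i = B i := (congrFun heq i).symm
    _ ≤ D i := hBDle i
  have hwtBD : wt Θ B D = μ * sz B D := wt_eq_of_relSl_eq Θ hBDle hBDne rfl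
  have hwtDE : μ * sz D E ≤ wt Θ D E := (le_relSl_iff Θ hDEle hDEne).1 hcon
  have hwtBE : μ * sz B E ≤ wt Θ B E := by
    have h1 := wt_cocycle Θ B D E
    have h2 := sz_cocycle B D E
    have h2' : μ * sz B E = μ * sz B D + μ * sz D E := by rw [h2, mul_add]
    linarith
  have hgeq : relSl Θ B D ≤ relSl Θ B E := (le_relSl_iff Θ hBE hBneE).2 hwtBE
  have hEleD : ∀ i, E i ≤ D i := (hBD.2.2.2 E hDE.1 hBE hBneE).2 hgeq
  exact hDEne (funext fun i => le_antisymm (hDEle i) (hEleD i))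

lemma chain_slope_lt :
    ∀ (d m : ℕ), (chain t h Θ x (m + d + 1) ≠ fun i => (⊤ : Submodule k (Fin (α i) → k))) →
    relSl Θ (chain t h Θ x (m + d + 1)) (chain t h Θ x (m + d + 2))
      < relSl Θ (chain t h Θ x m) (chain t h Θ x (m + 1)) := by
  intro d
  induction d with
  | zero => exact fun m hm => chain_slope_adj t h Θ x hm
  | succ d ih =>
    intro m hm
    have hm' : chain t h Θ x (m + d + 1) ≠ fun i => (⊤ : Submodule k (Fin (α i) → k)) := by
      intro htop
      exact hm (by
        have : m + (d + 1) + 1 = (m + d + 1) + 1 := by omega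
        rw [this]
        exact chain_stabilizes t h Θ x htop)
    have h1 : relSl Θ (chain t h Θ x (m + (d + 1) + 1)) (chain t h Θ x (m + (d + 1) + 2))
        < relSl Θ (chain t h Θ x (m + d + 1)) (chain t h Θ x (m + d + 2)) := by
      have heq1 : m + (d + 1) + 1 = (m + d + 1) + 1 := by omega
      have heq2 : m + (d + 1) + 2 = (m + d + 1) + 2 := by omega
      rw [heq1, heq2]
      exact chain_slope_adj t h Θ x (by rw [← heq1]; exact hm)
    exact h1.trans (ih m hm')

end chain

section exist

set_option linter.unusedSectionVars false

variable (t h : A → I) (Θ : I → ℤ)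
variable (x : ∀ a : A, Matrix (Fin (α (h a))) (Fin (α (t a))) k)

lemma exists_HN : ∃ F : Σ n : ℕ, Fin (n + 1) → Sub I k α, IsHNFiltration t h Θ x F := by
  classical
  have hex := chain_exists_top t h Θ x
  set n := Nat.find hex with hn
  have htop : chain t h Θ x n = fun i => (⊤ : Submodule k (Fin (α i) → k)) :=
    Nat.find_spec hex
  have hnot : ∀ m < n, chain t h Θ x m ≠ fun i => (⊤ : Submodule k (Fin (α i) → k)) :=
    fun m hm => Nat.find_min hex hm
  refine ⟨⟨n, fun j => chain t h Θ x j.val⟩, ?_, ?_, ?_, ?_, ?_, ?_⟩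
  · intro i
    show chain t h Θ x ((0 : Fin (n + 1)) : ℕ) i = ⊥
    have h0 : ((0 : Fin (n + 1)) : ℕ) = 0 := rfl
    rw [h0]
    rfl
  · intro i
    show chain t h Θ x ((Fin.last n : Fin (n + 1)) : ℕ) i = ⊤
    have h0 : ((Fin.last n : Fin (n + 1)) : ℕ) = n := rfl
    rw [h0, htop]
  · intro j
    exact chain_subrep t h Θ x j.val
  · intro j
    have hMD := chain_maxDest t h Θ x (hnot j.val j.isLt)
    exact ⟨hMD.2.1, hMD.2.2.1⟩
  · intro j U hU hle1 hle2 hne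
    have hMD := chain_maxDest t h Θ x (hnot j.val j.isLt)
    exact (hMD.2.2.2 U hU hle1 (Ne.symm hne)).1
  · intro j j' hlt
    have hvlt : j.val < j'.val := hlt
    obtain ⟨d, hd⟩ : ∃ d, (j' : ℕ) = (j : ℕ) + d + 1 := ⟨j'.val - j.val - 1, by omega⟩
    have hkey := chain_slope_lt t h Θ x d j.val
      (by rw [← hd]; exact hnot j'.val j'.isLt)
    show relSl Θ (chain t h Θ x (j'.castSucc : ℕ)) (chain t h Θ x (j'.succ : ℕ))
      < relSl Θ (chain t h Θ x (j.castSucc : ℕ)) (chain t h Θ x (j.succ : ℕ))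
    have e1 : ((j'.castSucc : Fin (n + 1)) : ℕ) = (j : ℕ) + d + 1 := by
      rw [Fin.coe_castSucc, hd]
    have e2 : ((j'.succ : Fin (n + 1)) : ℕ) = (j : ℕ) + d + 2 := by
      rw [Fin.val_succ, hd]
    have e3 : ((j.castSucc : Fin (n + 1)) : ℕ) = (j : ℕ) := Fin.coe_castSucc j
    have e4 : ((j.succ : Fin (n + 1)) : ℕ) = (j : ℕ) + 1 := Fin.val_succ j
    rw [e1, e2, e3, e4]
    exact hkey

end exist

section unique

set_option linter.unusedSectionVars false

variable (t h : A → I) (Θ : I → ℤ)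
variable (x : ∀ a : A, Matrix (Fin (α (h a))) (Fin (α (t a))) k)

/-- extend a filtration to all of `ℕ` -/
noncomputable def Vof (F : Σ n : ℕ, Fin (n + 1) → Sub I k α) (m : ℕ) : Sub I k α :=
  F.2 ⟨min m F.1, by omega⟩

lemma Vof_eq (F : Σ n : ℕ, Fin (n + 1) → Sub I k α) {m : ℕ} (hm : m ≤ F.1) :
    Vof F m = F.2 ⟨m, by omega⟩ := by
  unfold Vof
  exact congrArg F.2 (Fin.ext (by simp [min_eq_left hm]))

variable {F : Σ n : ℕ, Fin (n + 1) → Sub I k α}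

lemma Vof_zero (hF : IsHNFiltration t h Θ x F) :
    Vof F 0 = fun i => (⊥ : Submodule k (Fin (α i) → k)) := by
  rw [Vof_eq F (Nat.zero_le _)]
  have e : (⟨0, by omega⟩ : Fin (F.1 + 1)) = 0 := by ext; simp
  rw [e]
  exact funext hF.1

lemma Vof_top (hF : IsHNFiltration t h Θ x F) {m : ℕ} (hm : F.1 ≤ m) :
    Vof F m = fun i => (⊤ : Submodule k (Fin (α i) → k)) := by
  unfold Vof
  have e : (⟨min m F.1, by omega⟩ : Fin (F.1 + 1)) = Fin.last F.1 := by
    ext; simp [min_eq_right hm, Fin.last]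
  rw [e]
  exact funext hF.2.1

lemma Vof_subrep (hF : IsHNFiltration t h Θ x F) (m : ℕ) : IsSubrep t h x (Vof F m) :=
  hF.2.2.1 _

lemma Vof_step (hF : IsHNFiltration t h Θ x F) (m : ℕ) :
    ∀ i, Vof F m i ≤ Vof F (m + 1) i := by
  rcases lt_or_ge m F.1 with hm | hm
  · have hstep := (hF.2.2.2.1 ⟨m, hm⟩).1
    intro i
    rw [Vof_eq F hm.le, Vof_eq F (by omega)]
    exact hstep i
  · intro i
    rw [Vof_top t h Θ x hF (by omega : F.1 ≤ m + 1)]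
    exact le_top

lemma Vof_mono (hF : IsHNFiltration t h Θ x F) {m m' : ℕ} (hmm : m ≤ m') :
    ∀ i, Vof F m i ≤ Vof F m' i := by
  intro i
  have key : ∀ m'', m ≤ m'' → Vof F m i ≤ Vof F m'' i := by
    intro m''
    induction m'' with
    | zero =>
      intro hm0
      have h0 : m = 0 := by omega
      subst h0
      exact le_rfl
    | succ n ih =>
      intro hm1
      by_cases h' : m = n + 1
      · subst h'
        exact le_rfl
      · exact (ih (by omega)).trans (Vof_step t h Θ x hF n i)
  exact key m' hmm

lemma Vof_ne (hF : IsHNFiltration t h Θ x F) {m : ℕ} (hm : m < F.1) :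
    Vof F m ≠ Vof F (m + 1) := by
  have hne := (hF.2.2.2.1 ⟨m, hm⟩).2
  rw [Vof_eq F hm.le, Vof_eq F (by omega)]
  exact hne

lemma Vof_semistable (hF : IsHNFiltration t h Θ x F) {m : ℕ} (hm : m < F.1)
    (U : Sub I k α) (hU : IsSubrep t h x U) (h1 : ∀ i, Vof F m i ≤ U i)
    (h2 : ∀ i, U i ≤ Vof F (m + 1) i) (hne : U ≠ Vof F m) :
    relSl Θ (Vof F m) U ≤ relSl Θ (Vof F m) (Vof F (m + 1)) := by
  simp only [Vof_eq F hm.le, Vof_eq F (show m + 1 ≤ F.1 by omega)] at h1 h2 hne ⊢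
  exact hF.2.2.2.2.1 ⟨m, hm⟩ U hU h1 h2 hne

lemma Vof_slope_lt (hF : IsHNFiltration t h Θ x F) {m m' : ℕ}
    (hmm : m < m') (hm' : m' < F.1) :
    relSl Θ (Vof F m') (Vof F (m' + 1)) < relSl Θ (Vof F m) (Vof F (m + 1)) := by
  have hkey := hF.2.2.2.2.2 ⟨m, by omega⟩ ⟨m', hm'⟩ hmm
  rw [Vof_eq F hm'.le, Vof_eq F (by omega : m' + 1 ≤ F.1),
    Vof_eq F (by omega : m ≤ F.1), Vof_eq F (by omega : m + 1 ≤ F.1)]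
  exact hkey

lemma hn_wt_bound (hF : IsHNFiltration t h Θ x F) {j : ℕ} (hj : j < F.1) :
    ∀ m (U : Sub I k α), IsSubrep t h x U → (∀ i, Vof F j i ≤ U i) →
      (∀ i, U i ≤ Vof F m i) → U ≠ Vof F j →
      wt Θ (Vof F j) U ≤ relSl Θ (Vof F j) (Vof F (j + 1)) * sz (Vof F j) U ∧
      (¬(∀ i, U i ≤ Vof F (j + 1) i) →
        wt Θ (Vof F j) U < relSl Θ (Vof F j) (Vof F (j + 1)) * sz (Vof F j) U) := by
  intro m
  induction m with
  | zero =>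
    intro U hU h1 h2 hne
    exfalso
    apply hne
    refine funext fun i => le_antisymm ?_ (h1 i)
    have h0 : Vof F 0 i = ⊥ := congrFun (Vof_zero t h Θ x hF) i
    have hUi : U i = ⊥ := le_bot_iff.1 (h0 ▸ h2 i)
    rw [hUi]
    exact bot_le
  | succ m ih =>
    intro U hU h1 h2 hne
    set μ := relSl Θ (Vof F j) (Vof F (j + 1)) with hμ
    by_cases hUm : ∀ i, U i ≤ Vof F m i
    · exact ih U hU h1 hUm hne
    by_cases hmn : F.1 ≤ m
    · exact absurd (fun i => by
        rw [congrFun (Vof_top t h Θ x hF hmn) i]; exact le_top) hUm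
    push_neg at hmn
    by_cases hjm : m ≤ j
    · rcases lt_or_eq_of_le hjm with hlt | heq
      · exfalso
        apply hne
        exact funext fun i =>
          le_antisymm ((h2 i).trans (Vof_mono t h Θ x hF (by omega) i)) (h1 i)
      · subst heq
        have hle : relSl Θ (Vof F m) U ≤ μ :=
          Vof_semistable t h Θ x hF hj U hU h1 h2 hne
        have hw : wt Θ (Vof F m) U ≤ μ * sz (Vof F m) U :=
          (relSl_le_iff Θ h1 (Ne.symm hne)).1 hle
        exact ⟨hw, fun hcon => absurd h2 hcon⟩
    push_neg at hjm
    -- main case : j < m < F.1, U ⊈ V m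
    set C : Sub I k α := fun i => U i ⊓ Vof F m i with hCdef
    set E : Sub I k α := fun i => U i ⊔ Vof F m i with hEdef
    have hVmE : ∀ i, Vof F m i ≤ E i := fun i => le_sup_right
    have hE1 : ∀ i, E i ≤ Vof F (m + 1) i :=
      fun i => sup_le (h2 i) (Vof_step t h Θ x hF m i)
    have hEne : Vof F m ≠ E := by
      intro heq
      apply hUm
      intro i
      calc U i ≤ E i := le_sup_left
      _ = Vof F m i := (congrFun heq i).symm
    have hslE : relSl Θ (Vof F m) E ≤ relSl Θ (Vof F m) (Vof F (m + 1)) :=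
      Vof_semistable t h Θ x hF hmn E
        (isSubrep_sup t h x hU (Vof_subrep t h Θ x hF m)) hVmE hE1 (Ne.symm hEne)
    have hltμ : relSl Θ (Vof F m) (Vof F (m + 1)) < μ :=
      Vof_slope_lt t h Θ x hF hjm hmn
    have hszE : 0 < sz (Vof F m) E := sz_pos hVmE hEne
    have hwE : wt Θ (Vof F m) E < μ * sz (Vof F m) E := by
      have hw' := (relSl_le_iff Θ hVmE hEne).1 hslE
      have := mul_lt_mul_of_pos_right hltμ hszE
      linarith
    have hjC : ∀ i, Vof F j i ≤ C i :=
      fun i => le_inf (h1 i) (Vof_mono t h Θ x hF hjm.le i)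
    have hwC : wt Θ (Vof F j) C ≤ μ * sz (Vof F j) C := by
      rcases eq_or_ne (Vof F j) C with heq | hne'
      · rw [← heq, wt_self, sz_self, mul_zero]
      · exact (ih C (isSubrep_inf t h x hU (Vof_subrep t h Θ x hF m)) hjC
          (fun i => inf_le_right) (Ne.symm hne')).1
    have hw1 := wt_sup_inf Θ (Vof F j) U (Vof F m)
    have hs1 := sz_sup_inf (Vof F j) U (Vof F m)
    rw [← hCdef, ← hEdef] at hw1 hs1
    have hw2 := wt_cocycle Θ (Vof F j) (Vof F m) E
    have hs2 := sz_cocycle (Vof F j) (Vof F m) E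
    have hstrict : wt Θ (Vof F j) U < μ * sz (Vof F j) U := by
      have hszeq : sz (Vof F j) U = sz (Vof F j) C + sz (Vof F m) E := by linarith
      have hs' : μ * sz (Vof F j) U = μ * sz (Vof F j) C + μ * sz (Vof F m) E := by
        rw [hszeq, mul_add]
      linarith
    exact ⟨hstrict.le, fun _ => hstrict⟩

lemma hn_maxDest (hF : IsHNFiltration t h Θ x F) {j : ℕ} (hj : j < F.1) :
    MaxDest t h Θ x (Vof F j) (Vof F (j + 1)) := by
  refine ⟨Vof_subrep t h Θ x hF (j + 1), Vof_step t h Θ x hF j, Vof_ne t h Θ x hF hj, ?_⟩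
  intro U hU hBU hne
  have hb := hn_wt_bound t h Θ x hF hj F.1 U hU hBU
    (fun i => by rw [congrFun (Vof_top t h Θ x hF le_rfl) i]; exact le_top) (Ne.symm hne)
  constructor
  · exact (relSl_le_iff Θ hBU hne).2 hb.1
  · intro hge
    by_contra hcon
    have hlt := (relSl_lt_iff Θ hBU hne).2 (hb.2 hcon)
    exact absurd hge (not_le.2 hlt)

lemma hn_unique {F G : Σ n : ℕ, Fin (n + 1) → Sub I k α}
    (hF : IsHNFiltration t h Θ x F) (hG : IsHNFiltration t h Θ x G) : F = G := by
  have key : ∀ m, m ≤ F.1 → m ≤ G.1 → Vof F m = Vof G m := by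
    intro m
    induction m with
    | zero =>
      intro _ _
      rw [Vof_zero t h Θ x hF, Vof_zero t h Θ x hG]
    | succ m ih =>
      intro h1 h2
      have e := ih (by omega) (by omega)
      have hMF := hn_maxDest t h Θ x hF (show m < F.1 by omega)
      have hMG := hn_maxDest t h Θ x hG (show m < G.1 by omega)
      rw [← e] at hMG
      exact maxDest_unique t h Θ x hMF hMG
  have hlen : F.1 = G.1 := by
    rcases Nat.lt_trichotomy F.1 G.1 with hlt | heq | hlt
    · exfalso
      have e := key F.1 le_rfl hlt.le
      have htop : Vof G F.1 = fun i => (⊤ : Submodule k (Fin (α i) → k)) := by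
        rw [← e, Vof_top t h Θ x hF le_rfl]
      apply Vof_ne t h Θ x hG hlt
      refine funext fun i => le_antisymm (Vof_step t h Θ x hG F.1 i) ?_
      rw [congrFun htop i]
      exact le_top
    · exact heq
    · exfalso
      have e := key G.1 hlt.le le_rfl
      have htop : Vof F G.1 = fun i => (⊤ : Submodule k (Fin (α i) → k)) := by
        rw [e, Vof_top t h Θ x hG le_rfl]
      apply Vof_ne t h Θ x hF hlt
      refine funext fun i => le_antisymm (Vof_step t h Θ x hF G.1 i) ?_
      rw [congrFun htop i]
      exact le_top
  obtain ⟨nF, f⟩ := F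
  obtain ⟨nG, g⟩ := G
  have hlen' : nF = nG := hlen
  subst hlen'
  refine congrArg (Sigma.mk nF) ?_
  funext jj
  have hval : (jj : ℕ) ≤ nF := by omega
  have e1 : Vof (⟨nF, f⟩ : Σ n : ℕ, Fin (n + 1) → Sub I k α) jj.val = f jj := by
    rw [Vof_eq _ hval]
  have e2 : Vof (⟨nF, g⟩ : Σ n : ℕ, Fin (n + 1) → Sub I k α) jj.val = g jj := by
    rw [Vof_eq _ hval]
  calc f jj = Vof (⟨nF, f⟩ : Σ n : ℕ, Fin (n + 1) → Sub I k α) jj.val := e1.symm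
  _ = Vof (⟨nF, g⟩ : Σ n : ℕ, Fin (n + 1) → Sub I k α) jj.val := key jj.val hval hval
  _ = g jj := e2

end unique

end main

end HNaux

/-- Existence and uniqueness of the Harder–Narasimhan filtration for a nonzero
finite-dimensional representation of a finite quiver. -/
theorem existsUnique_HN_filtration
    {I A : Type} [Fintype I] (t h : A → I) (Θ : I → ℤ)
    (k : Type) [Field k] (α : I → ℕ) (hα : α ≠ 0)
    (x : ∀ a : A, Matrix (Fin (α (h a))) (Fin (α (t a))) k) :
    ∃! F : Σ n : ℕ, Fin (n + 1) → ∀ i : I, Submodule k (Fin (α i) → k),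
      IsHNFiltration t h Θ x F := by
  obtain ⟨F, hFil⟩ := HNaux.exists_HN t h Θ x
  exact ⟨F, hFil, fun G hG => HNaux.hn_unique t h Θ x hG hFil⟩
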